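/- Let Q be a symmetric n×n real matrix, f ∈ ℝⁿ. The function P^d(σ) = -(1/2)(f+σ)ᵀ[Q_d(σ)]⁻¹(f+σ) is convex on the open convex set S⁻ = {σ ∈ ℝⁿ : σ > 0 componentwise and Q_d(σ) = Q + 2Diag(σ) is negative definite}. -/

import Mathlib

open Matrix
variable {n : ℕ}

lemma dot_symm (B : Matrix (Fin n) (Fin n) ℝ) (hB : B.IsHermitian) (u v : Fin n → ℝ) :
    u ⬝ᵥ B *ᵥ v = v ⬝ᵥ B *ᵥ u := by
  have h : Bᵀ = B := by ext i j; simpa using congrFun (congrFun hB i) j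
  rw [dotProduct_mulVec, ← mulVec_transpose, h, dotProduct_comm]

lemma quad_nonneg (B : Matrix (Fin n) (Fin n) ℝ) (hB : B.PosSemidef) (w : Fin n → ℝ) :
    0 ≤ w ⬝ᵥ B *ᵥ w := by simpa using hB.dotProduct_mulVec_nonneg w

lemma key_ineq (B : Matrix (Fin n) (Fin n) ℝ) (hB : B.PosDef) (x z : Fin n → ℝ) :
    2 * (x ⬝ᵥ z) - z ⬝ᵥ B *ᵥ z ≤ x ⬝ᵥ B⁻¹ *ᵥ x := by
  have hdet : IsUnit B.det := hB.det_pos.ne'.isUnit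
  set u : Fin n → ℝ := B⁻¹ *ᵥ x with hu
  have hBu : B *ᵥ u = x := by
    rw [hu, mulVec_mulVec, Matrix.mul_nonsing_inv _ hdet, one_mulVec]
  have h0 : 0 ≤ (z - u) ⬝ᵥ B *ᵥ (z - u) := quad_nonneg B hB.posSemidef _
  have hexp : (z - u) ⬝ᵥ B *ᵥ (z - u)
      = z ⬝ᵥ B *ᵥ z - 2 * (x ⬝ᵥ z) + x ⬝ᵥ B⁻¹ *ᵥ x := by
    have h1 : z ⬝ᵥ B *ᵥ u = x ⬝ᵥ z := by
      rw [hBu]; exact dotProduct_comm _ _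
    have h2 : u ⬝ᵥ B *ᵥ z = x ⬝ᵥ z := by
      rw [dot_symm B hB.isHermitian, h1]
    have h3 : u ⬝ᵥ B *ᵥ u = x ⬝ᵥ B⁻¹ *ᵥ x := by
      rw [hBu, dotProduct_comm]
    rw [sub_dotProduct, mulVec_sub, dotProduct_sub, dotProduct_sub, h1, h2, h3]
    ring
  linarith

lemma neg_inv_mat (B : Matrix (Fin n) (Fin n) ℝ) (hB : B.PosDef) : (-B)⁻¹ = -B⁻¹ := by
  apply Matrix.inv_eq_right_inv
  rw [neg_mul_neg, Matrix.mul_nonsing_inv _ hB.det_pos.ne'.isUnit]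

lemma combo_posdef (B C : Matrix (Fin n) (Fin n) ℝ) (hB : B.PosDef) (hC : C.PosDef)
    (a b : ℝ) (ha : 0 ≤ a) (hb : 0 ≤ b) (hab : a + b = 1) : (a • B + b • C).PosDef := by
  refine posDef_iff_dotProduct_mulVec.mpr ⟨?_, ?_⟩
  · show _ = _
    rw [conjTranspose_add, conjTranspose_smul, conjTranspose_smul, hB.1, hC.1,
      star_trivial, star_trivial]
  · intro x hx
    have h1 := hB.dotProduct_mulVec_pos hx
    have h2 := hC.dotProduct_mulVec_pos hx
    simp only [star_trivial] at h1 h2 ⊢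
    rw [add_mulVec, smul_mulVec, smul_mulVec, dotProduct_add,
      dotProduct_smul, dotProduct_smul, smul_eq_mul, smul_eq_mul]
    rcases lt_or_ge 0 b with h | h
    · nlinarith [mul_nonneg hb h2.le]
    · nlinarith [mul_nonneg ha h1.le]

theorem Pd_convex_on_Sminus
    (n : ℕ) (Q : Matrix (Fin n) (Fin n) ℝ) (hQ : Q.IsSymm) (f : Fin n → ℝ)
    (Pd : (Fin n → ℝ) → ℝ)
    (hPd : ∀ σ, Pd σ =
      -(1 / 2 : ℝ) * ((f + σ) ⬝ᵥ (Q + 2 • Matrix.diagonal σ)⁻¹.mulVec (f + σ))) :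
    ConvexOn ℝ
      {σ : Fin n → ℝ | (∀ i, 0 < σ i) ∧ (-(Q + 2 • Matrix.diagonal σ)).PosDef} Pd := by
  -- notation
  set A : (Fin n → ℝ) → Matrix (Fin n) (Fin n) ℝ :=
    fun σ => -(Q + 2 • Matrix.diagonal σ) with hA
  have key_affine : ∀ (σ₁ σ₂ : Fin n → ℝ) (a b : ℝ), a + b = 1 →
      A (a • σ₁ + b • σ₂) = a • A σ₁ + b • A σ₂ := by
    intro σ₁ σ₂ a b hab
    ext i j
    by_cases h : i = j
    · subst h
      simp [hA, Matrix.add_apply, Matrix.smul_apply, Matrix.neg_apply, Matrix.diagonal,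
        Pi.add_apply, Pi.smul_apply, smul_eq_mul]
      linear_combination (Q i i) * hab
    · simp [hA, Matrix.add_apply, Matrix.smul_apply, Matrix.neg_apply, Matrix.diagonal, h,
        Pi.add_apply, Pi.smul_apply, smul_eq_mul]
      linear_combination (Q i j) * hab
  have hPd' : ∀ σ, (A σ).PosDef →
      Pd σ = (1 / 2 : ℝ) * ((f + σ) ⬝ᵥ (A σ)⁻¹ *ᵥ (f + σ)) := by
    intro σ hσ
    have : (Q + 2 • Matrix.diagonal σ) = -(A σ) := by simp [hA]
    rw [hPd σ, this, neg_inv_mat _ hσ, neg_mulVec, dotProduct_neg]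
    ring
  constructor
  · -- convexity of the set
    intro σ₁ hσ₁ σ₂ hσ₂ a b ha hb hab
    refine ⟨fun i => ?_, ?_⟩
    · have h1 := hσ₁.1 i
      have h2 := hσ₂.1 i
      simp only [Pi.add_apply, Pi.smul_apply, smul_eq_mul]
      rcases lt_or_ge 0 b with h | h
      · nlinarith
      · nlinarith
    · rw [show -(Q + 2 • Matrix.diagonal (a • σ₁ + b • σ₂)) = A (a • σ₁ + b • σ₂) from rfl,
        key_affine σ₁ σ₂ a b hab]
      exact combo_posdef _ _ hσ₁.2 hσ₂.2 a b ha hb hab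
  · intro σ₁ hσ₁ σ₂ hσ₂ a b ha hb hab
    have hB1 : (A σ₁).PosDef := hσ₁.2
    have hB2 : (A σ₂).PosDef := hσ₂.2
    have hBc : (A (a • σ₁ + b • σ₂)).PosDef := by
      rw [key_affine σ₁ σ₂ a b hab]; exact combo_posdef _ _ hB1 hB2 a b ha hb hab
    set x₁ : Fin n → ℝ := f + σ₁
    set x₂ : Fin n → ℝ := f + σ₂
    set σc : Fin n → ℝ := a • σ₁ + b • σ₂ with hσc
    have hx : f + σc = a • x₁ + b • x₂ := by
      funext i
      simp only [Pi.add_apply, Pi.smul_apply, smul_eq_mul, x₁, x₂, σc]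
      linear_combination (-(f i)) * hab
    set z : Fin n → ℝ := (A σc)⁻¹ *ᵥ (f + σc) with hz
    have hBz : (A σc) *ᵥ z = f + σc := by
      rw [hz, mulVec_mulVec, Matrix.mul_nonsing_inv _ hBc.det_pos.ne'.isUnit, one_mulVec]
    have hquad : (f + σc) ⬝ᵥ (A σc)⁻¹ *ᵥ (f + σc)
        = a * (2 * (x₁ ⬝ᵥ z) - z ⬝ᵥ (A σ₁) *ᵥ z)
          + b * (2 * (x₂ ⬝ᵥ z) - z ⬝ᵥ (A σ₂) *ᵥ z) := by
      have h1 : (f + σc) ⬝ᵥ (A σc)⁻¹ *ᵥ (f + σc)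
          = 2 * ((f + σc) ⬝ᵥ z) - z ⬝ᵥ (A σc) *ᵥ z := by
        rw [hBz]
        have : (f + σc) ⬝ᵥ z = z ⬝ᵥ (f + σc) := dotProduct_comm _ _
        rw [← hz, this]; ring
      rw [h1, hx, key_affine σ₁ σ₂ a b hab]
      rw [add_dotProduct, smul_dotProduct, smul_dotProduct, add_mulVec,
        smul_mulVec, smul_mulVec, dotProduct_add, dotProduct_smul,
        dotProduct_smul]
      simp only [smul_eq_mul]
      ring
    have hk1 := key_ineq (A σ₁) hB1 x₁ z
    have hk2 := key_ineq (A σ₂) hB2 x₂ z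
    rw [hPd' σc hBc, hPd' σ₁ hB1, hPd' σ₂ hB2, hquad]
    have h1' := mul_le_mul_of_nonneg_left hk1 ha
    have h2' := mul_le_mul_of_nonneg_left hk2 hb
    simp only [smul_eq_mul]
    nlinarith [h1', h2']
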